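/- Assume N ≥ 4. Under the permutation null distribution, Cov(R_{1,(a)}, R_{2,(a)}) = (f₁ − p₁q₁)(N − K + |C₀|)² + f₁ · ( −4( N − K + 2|C₀| + ∑_u deg_{C₀}(u)²/(4m(u)) − ∑_u deg_{C₀}(u)/m(u) ) + 6(K − ∑_u 1/m(u)) + ∑_{{u,w} edge of C₀} 1/(m(u)m(w)) ). -/

import Mathlib

open Finset MeasureTheory
open scoped BigOperators Classical

noncomputable section

lemma count_AB {N : ℕ} (n₁ : ℕ) (A B : Finset (Fin N)) (hAB : Disjoint A B) (hA : A.card ≤ n₁) :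
    ((Finset.powersetCard n₁ (Finset.univ : Finset (Fin N))).filter
      (fun S => A ⊆ S ∧ Disjoint B S)).card
      = (N - A.card - B.card).choose (n₁ - A.card) := by
  have hBsub : B ⊆ univ \ A := fun x hx => by
    simp only [mem_sdiff, mem_univ, true_and]
    exact fun hxA => (Finset.disjoint_left.1 hAB hxA) hx
  have hcard : ((univ \ A) \ B).card = N - A.card - B.card := by
    rw [card_sdiff_of_subset hBsub, card_sdiff_of_subset (subset_univ A), card_univ, Fintype.card_fin]
  rw [← hcard, ← Finset.card_powersetCard]
  apply Finset.card_bij' (fun S _ => S \ A) (fun T _ => T ∪ A)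
  · intro S hS
    simp only [mem_filter, Finset.mem_powersetCard] at hS
    obtain ⟨⟨_, hScard⟩, hAS, hBS⟩ := hS
    rw [Finset.mem_powersetCard]
    constructor
    · intro x hx
      simp only [mem_sdiff, mem_univ, true_and] at hx ⊢
      exact ⟨hx.2, fun hxB => (Finset.disjoint_left.1 hBS hxB) hx.1⟩
    · rw [card_sdiff_of_subset hAS, hScard]
  · intro T hT
    rw [Finset.mem_powersetCard] at hT
    obtain ⟨hTsub, hTcard⟩ := hT
    have hTA : Disjoint T A := by
      rw [Finset.disjoint_left]
      intro x hxT hxA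
      have := hTsub hxT
      simp only [mem_sdiff, mem_univ, true_and] at this
      exact this.1 hxA
    have hTB : Disjoint B T := by
      rw [Finset.disjoint_left]
      intro x hxB hxT
      have := hTsub hxT
      simp only [mem_sdiff, mem_univ, true_and] at this
      exact this.2 hxB
    simp only [mem_filter, Finset.mem_powersetCard]
    refine ⟨⟨subset_univ _, ?_⟩, Finset.subset_union_right, ?_⟩
    · rw [Finset.card_union_of_disjoint hTA, hTcard]
      omega
    · rw [Finset.disjoint_union_right]
      exact ⟨hTB, hAB.symm⟩
  · intro S hS
    simp only [mem_filter] at hS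
    exact Finset.sdiff_union_of_subset hS.2.1
  · intro T hT
    rw [Finset.mem_powersetCard] at hT
    apply Finset.union_sdiff_cancel_right
    rw [Finset.disjoint_left]
    intro x hxT hxA
    have := hT.1 hxT
    simp only [mem_sdiff, mem_univ, true_and] at this
    exact this.1 hxA


lemma fact_ne (n : ℕ) : ((n.factorial : ℝ)) ≠ 0 := by
  exact_mod_cast (Nat.factorial_pos n).ne'

lemma fact_pos' (n : ℕ) : (0:ℝ) < (n.factorial : ℝ) := by
  exact_mod_cast Nat.factorial_pos n

lemma choose_ne {N n₁ : ℕ} (h : n₁ ≤ N) : ((N.choose n₁ : ℝ)) ≠ 0 := by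
  exact_mod_cast (Nat.choose_pos h).ne'

lemma ratio_f {N n₁ n₂ : ℕ} (h : n₁ + n₂ = N) (hN : 4 ≤ N) (h1 : 2 ≤ n₁) (h2 : 1 ≤ n₂) :
    ((N - 4).choose (n₁ - 2) : ℝ) / (N.choose n₁ : ℝ)
      = (n₁ : ℝ) * ((n₁ : ℝ) - 1) * (n₂ : ℝ) * ((n₂ : ℝ) - 1) /
        ((N : ℝ) * ((N : ℝ) - 1) * ((N : ℝ) - 2) * ((N : ℝ) - 3)) := by
  rcases Nat.lt_or_ge n₂ 2 with h2' | h2'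
  · have hb : n₂ = 1 := by omega
    have hlt : N - 4 < n₁ - 2 := by omega
    rw [Nat.choose_eq_zero_of_lt hlt, hb]
    push_cast
    simp
  · obtain ⟨a, rfl⟩ : ∃ a, n₁ = a + 2 := ⟨n₁ - 2, by omega⟩
    obtain ⟨b, rfl⟩ : ∃ b, n₂ = b + 2 := ⟨n₂ - 2, by omega⟩
    subst h
    rw [show (a + 2 + (b + 2)) - 4 = a + b by omega, show (a + 2) - 2 = a by omega]
    have hR : ((a+2:ℕ) : ℝ) * (((a+2:ℕ)) - 1) * ((b+2:ℕ)) * (((b+2:ℕ)) - 1) /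
        (((a + 2 + (b + 2) : ℕ)) * (((a + 2 + (b + 2):ℕ)) - 1) * (((a + 2 + (b + 2):ℕ)) - 2)
          * (((a + 2 + (b + 2):ℕ)) - 3))
        = (((a:ℝ)+2)*((a:ℝ)+1)*((b:ℝ)+2)*((b:ℝ)+1)) /
          (((a:ℝ)+(b:ℝ)+4)*((a:ℝ)+(b:ℝ)+3)*((a:ℝ)+(b:ℝ)+2)*((a:ℝ)+(b:ℝ)+1)) := by
      push_cast; ring
    rw [hR, Nat.cast_choose ℝ (by omega : a ≤ a + b),
        show a + b - a = b by omega,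
        Nat.cast_choose ℝ (by omega : a + 2 ≤ a + 2 + (b + 2)),
        show a + 2 + (b + 2) - (a + 2) = b + 2 by omega,
        show a + 2 + (b + 2) = a + b + 4 by omega]
    have f1 : ((a+b+4).factorial : ℝ)
        = ((a:ℝ)+b+4) * ((a:ℝ)+b+3) * ((a:ℝ)+b+2) * ((a:ℝ)+b+1) * (a+b).factorial := by
      rw [show a+b+4 = (a+b+3)+1 by omega, Nat.factorial_succ,
          show a+b+3 = (a+b+2)+1 by omega, Nat.factorial_succ,
          show a+b+2 = (a+b+1)+1 by omega, Nat.factorial_succ,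
          show a+b+1 = (a+b)+1 by omega, Nat.factorial_succ]
      push_cast; ring
    have f2 : (((a+2).factorial : ℝ)) = ((a:ℝ)+2) * ((a:ℝ)+1) * a.factorial := by
      rw [show a+2 = (a+1)+1 by omega, Nat.factorial_succ, Nat.factorial_succ]
      push_cast; ring
    have f3 : (((b+2).factorial : ℝ)) = ((b:ℝ)+2) * ((b:ℝ)+1) * b.factorial := by
      rw [show b+2 = (b+1)+1 by omega, Nat.factorial_succ, Nat.factorial_succ]
      push_cast; ring
    have hB : ((a+b+4).factorial : ℝ) / ((a+2).factorial * (b+2).factorial) ≠ 0 := by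
      have := fact_pos' (a+b+4); have := fact_pos' (a+2); have := fact_pos' (b+2)
      positivity
    have hD : (((a:ℝ)+(b:ℝ)+4)*((a:ℝ)+(b:ℝ)+3)*((a:ℝ)+(b:ℝ)+2)*((a:ℝ)+(b:ℝ)+1)) ≠ 0 := by
      positivity
    rw [div_eq_div_iff hB hD, f1, f2, f3]
    have g1 := fact_ne a; have g2 := fact_ne b; have g3 := fact_ne (a+b)
    field_simp

lemma ratio_p {N n₁ n₂ : ℕ} (h : n₁ + n₂ = N) (h1 : 2 ≤ n₁) :
    ((N - 2).choose (n₁ - 2) : ℝ) / (N.choose n₁ : ℝ)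
      = (n₁ : ℝ) * ((n₁ : ℝ) - 1) / ((N : ℝ) * ((N : ℝ) - 1)) := by
  obtain ⟨a, rfl⟩ : ∃ a, n₁ = a + 2 := ⟨n₁ - 2, by omega⟩
  subst h
  rw [show (a + 2 + n₂) - 2 = a + n₂ by omega, show (a + 2) - 2 = a by omega]
  have hR : ((a+2:ℕ) : ℝ) * (((a+2:ℕ)) - 1) /
      (((a + 2 + n₂ : ℕ)) * (((a + 2 + n₂:ℕ)) - 1))
      = (((a:ℝ)+2)*((a:ℝ)+1)) / (((a:ℝ)+(n₂:ℝ)+2)*((a:ℝ)+(n₂:ℝ)+1)) := by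
    push_cast; ring
  rw [hR, Nat.cast_choose ℝ (by omega : a ≤ a + n₂),
      show a + n₂ - a = n₂ by omega,
      Nat.cast_choose ℝ (by omega : a + 2 ≤ a + 2 + n₂),
      show a + 2 + n₂ - (a + 2) = n₂ by omega,
      show a + 2 + n₂ = a + n₂ + 2 by omega]
  have f1 : ((a+n₂+2).factorial : ℝ)
      = ((a:ℝ)+n₂+2) * ((a:ℝ)+n₂+1) * (a+n₂).factorial := by
    rw [show a+n₂+2 = (a+n₂+1)+1 by omega, Nat.factorial_succ,
        show a+n₂+1 = (a+n₂)+1 by omega, Nat.factorial_succ]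
    push_cast; ring
  have f2 : (((a+2).factorial : ℝ)) = ((a:ℝ)+2) * ((a:ℝ)+1) * a.factorial := by
    rw [show a+2 = (a+1)+1 by omega, Nat.factorial_succ, Nat.factorial_succ]
    push_cast; ring
  have hB : ((a+n₂+2).factorial : ℝ) / ((a+2).factorial * n₂.factorial) ≠ 0 := by
    have := fact_pos' (a+n₂+2); have := fact_pos' (a+2); have := fact_pos' n₂
    positivity
  have hD : (((a:ℝ)+(n₂:ℝ)+2)*((a:ℝ)+(n₂:ℝ)+1)) ≠ 0 := by positivity
  rw [div_eq_div_iff hB hD, f1, f2]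
  have g1 := fact_ne a; have g2 := fact_ne n₂; have g3 := fact_ne (a+n₂)
  field_simp

lemma ratio_q {N n₁ n₂ : ℕ} (h : n₁ + n₂ = N) (hN : 2 ≤ N) (h2 : 1 ≤ n₂) :
    ((N - 2).choose n₁ : ℝ) / (N.choose n₁ : ℝ)
      = (n₂ : ℝ) * ((n₂ : ℝ) - 1) / ((N : ℝ) * ((N : ℝ) - 1)) := by
  rcases Nat.lt_or_ge n₂ 2 with h2' | h2'
  · have hb : n₂ = 1 := by omega
    have hlt : N - 2 < n₁ := by omega
    rw [Nat.choose_eq_zero_of_lt hlt, hb]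
    push_cast
    simp
  · obtain ⟨b, rfl⟩ : ∃ b, n₂ = b + 2 := ⟨n₂ - 2, by omega⟩
    subst h
    rw [show (n₁ + (b + 2)) - 2 = n₁ + b by omega]
    have hR : ((b+2:ℕ) : ℝ) * (((b+2:ℕ)) - 1) /
        (((n₁ + (b + 2) : ℕ)) * (((n₁ + (b + 2):ℕ)) - 1))
        = (((b:ℝ)+2)*((b:ℝ)+1)) / (((n₁:ℝ)+(b:ℝ)+2)*((n₁:ℝ)+(b:ℝ)+1)) := by
      push_cast; ring
    rw [hR, Nat.cast_choose ℝ (by omega : n₁ ≤ n₁ + b),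
        show n₁ + b - n₁ = b by omega,
        Nat.cast_choose ℝ (by omega : n₁ ≤ n₁ + (b + 2)),
        show n₁ + (b + 2) - n₁ = b + 2 by omega,
        show n₁ + (b + 2) = n₁ + b + 2 by omega]
    have f1 : ((n₁+b+2).factorial : ℝ)
        = ((n₁:ℝ)+b+2) * ((n₁:ℝ)+b+1) * (n₁+b).factorial := by
      rw [show n₁+b+2 = (n₁+b+1)+1 by omega, Nat.factorial_succ,
          show n₁+b+1 = (n₁+b)+1 by omega, Nat.factorial_succ]
      push_cast; ring
    have f3 : (((b+2).factorial : ℝ)) = ((b:ℝ)+2) * ((b:ℝ)+1) * b.factorial := by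
      rw [show b+2 = (b+1)+1 by omega, Nat.factorial_succ, Nat.factorial_succ]
      push_cast; ring
    have hB : ((n₁+b+2).factorial : ℝ) / (n₁.factorial * (b+2).factorial) ≠ 0 := by
      have := fact_pos' (n₁+b+2); have := fact_pos' n₁; have := fact_pos' (b+2)
      positivity
    have hD : (((n₁:ℝ)+(b:ℝ)+2)*((n₁:ℝ)+(b:ℝ)+1)) ≠ 0 := by positivity
    rw [div_eq_div_iff hB hD, f1, f3]
    have g1 := fact_ne n₁; have g2 := fact_ne b; have g3 := fact_ne (n₁+b)
    field_simp


-- the indicator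
noncomputable def xI {N : ℕ} (i : Fin N) (S : Finset (Fin N)) : ℝ := if i ∈ S then 1 else 0

lemma momXY {N n₁ n₂ : ℕ} (h : n₁ + n₂ = N) (hN : 4 ≤ N) (h1 : 1 ≤ n₁) (h2 : 1 ≤ n₂)
    {i j k l : Fin N} (hij : i ≠ j) (hkl : k ≠ l)
    (hik : i ≠ k) (hil : i ≠ l) (hjk : j ≠ k) (hjl : j ≠ l) :
    (∑ S ∈ Finset.powersetCard n₁ (Finset.univ : Finset (Fin N)),
        xI i S * xI j S * (1 - xI k S) * (1 - xI l S)) / (N.choose n₁ : ℝ)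
      = (n₁ : ℝ) * ((n₁ : ℝ) - 1) * (n₂ : ℝ) * ((n₂ : ℝ) - 1) /
        ((N : ℝ) * ((N : ℝ) - 1) * ((N : ℝ) - 2) * ((N : ℝ) - 3)) := by
  have hsum : (∑ S ∈ Finset.powersetCard n₁ (Finset.univ : Finset (Fin N)),
      xI i S * xI j S * (1 - xI k S) * (1 - xI l S))
      = (((Finset.powersetCard n₁ (Finset.univ : Finset (Fin N))).filter
          (fun S => ({i, j} : Finset (Fin N)) ⊆ S ∧ Disjoint ({k, l} : Finset (Fin N)) S)).card
        : ℝ) := by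
    rw [← Finset.sum_boole]
    apply Finset.sum_congr rfl
    intro S _
    by_cases hi : i ∈ S <;> by_cases hj : j ∈ S <;> by_cases hk : k ∈ S <;> by_cases hl : l ∈ S <;>
      simp [xI, hi, hj, hk, hl, Finset.insert_subset_iff, Finset.disjoint_insert_left,
        Finset.disjoint_singleton_left]
  rw [hsum]
  have hAB : Disjoint ({i, j} : Finset (Fin N)) ({k, l} : Finset (Fin N)) := by
    simp only [Finset.disjoint_insert_left, Finset.disjoint_insert_right,
      Finset.disjoint_singleton_left, Finset.mem_insert, Finset.mem_singleton]
    push_neg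
    exact ⟨⟨hik.symm, hjk.symm⟩, hil, hjl⟩
  have hcA : ({i, j} : Finset (Fin N)).card = 2 := by
    rw [Finset.card_insert_of_notMem (by simp [hij]), Finset.card_singleton]
  have hcB : ({k, l} : Finset (Fin N)).card = 2 := by
    rw [Finset.card_insert_of_notMem (by simp [hkl]), Finset.card_singleton]
  rcases Nat.lt_or_ge n₁ 2 with h1' | h1'
  · have hn1 : n₁ = 1 := by omega
    have hempty : ((Finset.powersetCard n₁ (Finset.univ : Finset (Fin N))).filter
        (fun S => ({i, j} : Finset (Fin N)) ⊆ S ∧ Disjoint ({k, l} : Finset (Fin N)) S)) = ∅ := by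
      rw [Finset.eq_empty_iff_forall_notMem]
      intro S hS
      simp only [Finset.mem_filter, Finset.mem_powersetCard] at hS
      have := Finset.card_le_card hS.2.1
      rw [hcA, hS.1.2, hn1] at this
      omega
    rw [hempty, hn1]
    simp
  · have := count_AB n₁ ({i, j} : Finset (Fin N)) ({k, l} : Finset (Fin N)) hAB (by omega)
    rw [hcA, hcB] at this
    rw [this, show N - 2 - 2 = N - 4 by omega]
    exact ratio_f h hN h1' h2

lemma momX {N n₁ n₂ : ℕ} (h : n₁ + n₂ = N) (hN : 4 ≤ N) (h1 : 1 ≤ n₁)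
    {i j : Fin N} (hij : i ≠ j) :
    (∑ S ∈ Finset.powersetCard n₁ (Finset.univ : Finset (Fin N)),
        xI i S * xI j S) / (N.choose n₁ : ℝ)
      = (n₁ : ℝ) * ((n₁ : ℝ) - 1) / ((N : ℝ) * ((N : ℝ) - 1)) := by
  have hsum : (∑ S ∈ Finset.powersetCard n₁ (Finset.univ : Finset (Fin N)), xI i S * xI j S)
      = (((Finset.powersetCard n₁ (Finset.univ : Finset (Fin N))).filter
          (fun S => ({i, j} : Finset (Fin N)) ⊆ S ∧ Disjoint (∅ : Finset (Fin N)) S)).card : ℝ) := by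
    rw [← Finset.sum_boole]
    apply Finset.sum_congr rfl
    intro S _
    by_cases hi : i ∈ S <;> by_cases hj : j ∈ S <;>
      simp [xI, hi, hj, Finset.insert_subset_iff]
  rw [hsum]
  have hcA : ({i, j} : Finset (Fin N)).card = 2 := by
    rw [Finset.card_insert_of_notMem (by simp [hij]), Finset.card_singleton]
  rcases Nat.lt_or_ge n₁ 2 with h1' | h1'
  · have hn1 : n₁ = 1 := by omega
    have hempty : ((Finset.powersetCard n₁ (Finset.univ : Finset (Fin N))).filter
        (fun S => ({i, j} : Finset (Fin N)) ⊆ S ∧ Disjoint (∅ : Finset (Fin N)) S)) = ∅ := by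
      rw [Finset.eq_empty_iff_forall_notMem]
      intro S hS
      simp only [Finset.mem_filter, Finset.mem_powersetCard] at hS
      have := Finset.card_le_card hS.2.1
      rw [hcA, hS.1.2, hn1] at this
      omega
    rw [hempty, hn1]
    simp
  · have := count_AB n₁ ({i, j} : Finset (Fin N)) (∅ : Finset (Fin N))
      (Finset.disjoint_empty_right _) (by omega)
    rw [hcA, Finset.card_empty] at this
    rw [this, show N - 2 - 0 = N - 2 by omega]
    exact ratio_p h h1'

lemma momY {N n₁ n₂ : ℕ} (h : n₁ + n₂ = N) (hN : 4 ≤ N) (h2 : 1 ≤ n₂)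
    {k l : Fin N} (hkl : k ≠ l) :
    (∑ S ∈ Finset.powersetCard n₁ (Finset.univ : Finset (Fin N)),
        (1 - xI k S) * (1 - xI l S)) / (N.choose n₁ : ℝ)
      = (n₂ : ℝ) * ((n₂ : ℝ) - 1) / ((N : ℝ) * ((N : ℝ) - 1)) := by
  have hsum : (∑ S ∈ Finset.powersetCard n₁ (Finset.univ : Finset (Fin N)),
      (1 - xI k S) * (1 - xI l S))
      = (((Finset.powersetCard n₁ (Finset.univ : Finset (Fin N))).filter
          (fun S => (∅ : Finset (Fin N)) ⊆ S ∧ Disjoint ({k, l} : Finset (Fin N)) S)).card : ℝ) := by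
    rw [← Finset.sum_boole]
    apply Finset.sum_congr rfl
    intro S _
    by_cases hk : k ∈ S <;> by_cases hl : l ∈ S <;>
      simp [xI, hk, hl, Finset.disjoint_insert_left, Finset.disjoint_singleton_left]
  rw [hsum]
  have hcB : ({k, l} : Finset (Fin N)).card = 2 := by
    rw [Finset.card_insert_of_notMem (by simp [hkl]), Finset.card_singleton]
  have := count_AB n₁ (∅ : Finset (Fin N)) ({k, l} : Finset (Fin N))
    (Finset.disjoint_empty_left _) (by simp)
  rw [Finset.card_empty, hcB] at this
  rw [this, show N - 0 - 2 = N - 2 by omega, show n₁ - 0 = n₁ by omega]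
  exact ratio_q h (by omega) h2


lemma edge_sum {K : ℕ} (C₀ : SimpleGraph (Fin K)) (f : Fin K → Fin K → ℝ)
    (hf : ∀ a b, f a b = f b a) :
    ∑ u, ∑ w, (if C₀.Adj u w then f u w else 0)
      = 2 * ∑ e ∈ C₀.edgeFinset, Sym2.lift ⟨f, hf⟩ e := by
  have h1 : ∑ u, ∑ w, (if C₀.Adj u w then f u w else 0)
      = ∑ p ∈ (Finset.univ ×ˢ Finset.univ).filter (fun p : Fin K × Fin K => C₀.Adj p.1 p.2),
          f p.1 p.2 := by
    rw [Finset.sum_filter, Finset.sum_product]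
  rw [h1]
  have hmaps : ∀ p ∈ (Finset.univ ×ˢ Finset.univ).filter
      (fun p : Fin K × Fin K => C₀.Adj p.1 p.2), s(p.1, p.2) ∈ C₀.edgeFinset := by
    intro p hp
    simp only [Finset.mem_filter] at hp
    rw [SimpleGraph.mem_edgeFinset]
    exact hp.2
  rw [← Finset.sum_fiberwise_of_maps_to hmaps (fun p => f p.1 p.2)]
  rw [Finset.mul_sum]
  apply Finset.sum_congr rfl
  intro e he
  induction e using Sym2.ind with
  | _ a b =>
    rw [SimpleGraph.mem_edgeFinset, SimpleGraph.mem_edgeSet] at he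
    have hab : a ≠ b := he.ne
    have hfil : ((Finset.univ ×ˢ Finset.univ).filter
        (fun p : Fin K × Fin K => C₀.Adj p.1 p.2)).filter
          (fun p => s(p.1, p.2) = s(a, b)) = {(a, b), (b, a)} := by
      ext p
      simp only [Finset.mem_filter, Finset.mem_product, Finset.mem_univ, true_and,
        Finset.mem_insert, Finset.mem_singleton, Sym2.eq_iff]
      constructor
      · rintro ⟨_, ⟨h1, h2⟩ | ⟨h1, h2⟩⟩
        · left; exact Prod.ext h1 h2
        · right; exact Prod.ext h1 h2
      · rintro (rfl | rfl)
        · exact ⟨he, Or.inl ⟨rfl, rfl⟩⟩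
        · exact ⟨he.symm, Or.inr ⟨rfl, rfl⟩⟩
    rw [hfil, Sym2.lift_mk]
    rw [Finset.sum_pair (by simp [hab, Prod.ext_iff])]
    simp only []
    rw [hf b a]
    ring


noncomputable def Cmat {K : ℕ} (m : Fin K → ℕ) (C₀ : SimpleGraph (Fin K)) (u w : Fin K) : ℝ :=
  if u = w then (m u : ℝ)⁻¹ else if C₀.Adj u w then ((2:ℝ) * m u * m w)⁻¹ else 0

noncomputable def cmat {K N : ℕ} (m : Fin K → ℕ) (C₀ : SimpleGraph (Fin K))
    (v : Fin N → Fin K) (i j : Fin N) : ℝ :=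
  if i = j then 0 else Cmat m C₀ (v i) (v j)

lemma Cmat_symm {K : ℕ} (m : Fin K → ℕ) (C₀ : SimpleGraph (Fin K)) (u w : Fin K) :
    Cmat m C₀ u w = Cmat m C₀ w u := by
  unfold Cmat
  by_cases h : u = w
  · subst h; simp
  · rw [if_neg h, if_neg (Ne.symm h)]
    by_cases ha : C₀.Adj u w
    · rw [if_pos ha, if_pos ha.symm]; ring
    · rw [if_neg ha, if_neg (fun h' => ha h'.symm)]

lemma cmat_symm {K N : ℕ} (m : Fin K → ℕ) (C₀ : SimpleGraph (Fin K))
    (v : Fin N → Fin K) (i j : Fin N) : cmat m C₀ v i j = cmat m C₀ v j i := by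
  unfold cmat
  by_cases h : i = j
  · subst h; simp
  · rw [if_neg h, if_neg (Ne.symm h), Cmat_symm]

lemma collapse1 {K : ℕ} (x : Fin K) (h : Fin K → ℝ) :
    ∑ u, (if x = u then h u else 0) = h x := by
  rw [Finset.sum_ite_eq]; simp

lemma collapse2 {K : ℕ} (x y : Fin K) (F : Fin K → Fin K → ℝ) :
    ∑ u, ∑ w, (if x = u ∧ y = w then F u w else 0) = F x y := by
  have : ∀ u, ∑ w, (if x = u ∧ y = w then F u w else 0)
      = if x = u then F u y else 0 := by
    intro u
    by_cases hu : x = u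
    · simp only [hu, true_and, if_pos rfl]
      exact collapse1 y (F u)
    · simp [hu]
  rw [Finset.sum_congr rfl (fun u _ => this u)]
  exact collapse1 x (fun u => F u y)

lemma diag_split {N : ℕ} (f : Fin N → Fin N → ℝ) :
    ∑ i, ∑ j, (if i = j then (0:ℝ) else f i j) = ∑ i, ∑ j, f i j - ∑ i, f i i := by
  have key : ∀ i : Fin N, ∑ j, (if i = j then (0:ℝ) else f i j) = (∑ j, f i j) - f i i := by
    intro i
    have h2 : ∑ j, f i j
        = ∑ j, ((if i = j then f i j else 0) + (if i = j then (0:ℝ) else f i j)) := by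
      apply Finset.sum_congr rfl
      intro j _
      by_cases h : i = j <;> simp [h]
    rw [h2, Finset.sum_add_distrib, Finset.sum_ite_eq]
    simp
  rw [Finset.sum_congr rfl (fun i _ => key i), Finset.sum_sub_distrib]

lemma swap4 {K N : ℕ} (A : Fin K → Fin K → Fin N → Fin N → ℝ) :
    ∑ u, ∑ w, ∑ i, ∑ j, A u w i j = ∑ i, ∑ j, ∑ u, ∑ w, A u w i j := by
  have h1 : ∀ u : Fin K, ∑ w, ∑ i, ∑ j, A u w i j = ∑ i, ∑ j, ∑ w, A u w i j := by
    intro u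
    rw [Finset.sum_comm]
    exact Finset.sum_congr rfl (fun i _ => Finset.sum_comm)
  rw [Finset.sum_congr rfl (fun u _ => h1 u), Finset.sum_comm]
  exact Finset.sum_congr rfl (fun i _ => Finset.sum_comm)


lemma rep {K N : ℕ} (m : Fin K → ℕ) (C₀ : SimpleGraph (Fin K)) (v : Fin N → Fin K)
    (z : Fin N → ℝ) (hz : ∀ i, z i * z i = z i) (g : Fin K → ℝ)
    (hg : ∀ u, g u = ∑ i, if v i = u then z i else 0) :
    ∑ u, g u * (g u - 1) / (m u : ℝ)
      + ∑ e ∈ C₀.edgeFinset,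
          Sym2.lift ⟨fun u w => g u * g w / ((m u : ℝ) * (m w : ℝ)), fun u w => by ring⟩ e
    = ∑ i, ∑ j, cmat m C₀ v i j * (z i * z j) := by
  -- product expansion of g u * g w
  have hguw : ∀ u w, g u * g w
      = ∑ i, ∑ j, (if v i = u ∧ v j = w then z i * z j else 0) := by
    intro u w
    rw [hg u, hg w, Finset.sum_mul_sum]
    apply Finset.sum_congr rfl; intro i _
    apply Finset.sum_congr rfl; intro j _
    by_cases h1 : v i = u <;> by_cases h2 : v j = w <;> simp [h1, h2]
  -- Part A : the within-group sum
  have hA : ∑ u, g u * (g u - 1) / (m u : ℝ)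
      = (∑ i, ∑ j, (if v i = v j then ((m (v i) : ℝ))⁻¹ else 0) * (z i * z j))
        - ∑ i, ((m (v i) : ℝ))⁻¹ * z i := by
    have e1 : ∀ u, g u * (g u - 1) / (m u : ℝ)
        = g u * g u * ((m u : ℝ))⁻¹ - g u * ((m u : ℝ))⁻¹ := by intro u; ring
    rw [Finset.sum_congr rfl (fun u _ => e1 u), Finset.sum_sub_distrib]
    congr 1
    · -- ∑ u, g u * g u * (m u)⁻¹
      have e2 : ∀ u, g u * g u * ((m u : ℝ))⁻¹
          = ∑ i, ∑ j, (if v i = u ∧ v j = u then z i * z j * ((m u : ℝ))⁻¹ else 0) := by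
        intro u
        rw [hguw u u, Finset.sum_mul]
        apply Finset.sum_congr rfl; intro i _
        rw [Finset.sum_mul]
        apply Finset.sum_congr rfl; intro j _
        by_cases h : v i = u ∧ v j = u <;> simp [h]
      rw [Finset.sum_congr rfl (fun u _ => e2 u)]
      rw [Finset.sum_comm]
      apply Finset.sum_congr rfl; intro i _
      rw [Finset.sum_comm]
      apply Finset.sum_congr rfl; intro j _
      -- ∑ u, if v i = u ∧ v j = u then z i * z j * (m u)⁻¹ else 0
      by_cases hvv : v i = v j
      · have : ∀ u, (if v i = u ∧ v j = u then z i * z j * ((m u : ℝ))⁻¹ else 0)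
            = if v i = u then z i * z j * ((m u : ℝ))⁻¹ else 0 := by
          intro u
          by_cases h : v i = u
          · simp [h, hvv ▸ h, ← hvv]
          · simp [h]
        rw [Finset.sum_congr rfl (fun u _ => this u),
            collapse1 (v i) (fun u => z i * z j * ((m u : ℝ))⁻¹), if_pos hvv]
        ring
      · rw [if_neg hvv, Finset.sum_eq_zero]
        · simp
        · intro u _
          rw [if_neg]
          rintro ⟨h1, h2⟩
          exact hvv (h1.trans h2.symm)
    · -- ∑ u, g u * (m u)⁻¹
      have e3 : ∀ u, g u * ((m u : ℝ))⁻¹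
          = ∑ i, (if v i = u then ((m u : ℝ))⁻¹ * z i else 0) := by
        intro u
        rw [hg u, Finset.sum_mul]
        apply Finset.sum_congr rfl; intro i _
        by_cases h : v i = u
        · simp [h, mul_comm]
        · simp [h]
      rw [Finset.sum_congr rfl (fun u _ => e3 u), Finset.sum_comm]
      apply Finset.sum_congr rfl; intro i _
      exact collapse1 (v i) (fun u => ((m u : ℝ))⁻¹ * z i)
  -- Part B : the edge sum
  have hB : ∑ e ∈ C₀.edgeFinset,
        Sym2.lift ⟨fun u w => g u * g w / ((m u : ℝ) * (m w : ℝ)), fun u w => by ring⟩ e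
      = (1/2) * ∑ i, ∑ j,
          (if C₀.Adj (v i) (v j) then z i * z j / ((m (v i) : ℝ) * (m (v j) : ℝ)) else 0) := by
    have hB0 := edge_sum C₀ (fun u w => g u * g w / ((m u : ℝ) * (m w : ℝ)))
      (fun a b => by ring)
    have hB1 : ∑ u, ∑ w, (if C₀.Adj u w then g u * g w / ((m u : ℝ) * (m w : ℝ)) else 0)
        = ∑ i, ∑ j,
            (if C₀.Adj (v i) (v j) then z i * z j / ((m (v i) : ℝ) * (m (v j) : ℝ)) else 0) := by
      have e4 : ∀ u w, (if C₀.Adj u w then g u * g w / ((m u : ℝ) * (m w : ℝ)) else 0)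
          = ∑ i, ∑ j, (if v i = u ∧ v j = w then
              (if C₀.Adj u w then z i * z j / ((m u : ℝ) * (m w : ℝ)) else 0) else 0) := by
        intro u w
        by_cases ha : C₀.Adj u w
        · rw [if_pos ha, hguw u w, Finset.sum_div]
          apply Finset.sum_congr rfl; intro i _
          rw [Finset.sum_div]
          apply Finset.sum_congr rfl; intro j _
          by_cases h : v i = u ∧ v j = w <;> simp [h, ha]
        · rw [if_neg ha, eq_comm]
          apply Finset.sum_eq_zero; intro i _
          apply Finset.sum_eq_zero; intro j _
          simp [ha]
      rw [Finset.sum_congr rfl (fun u _ => Finset.sum_congr rfl (fun w _ => e4 u w))]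
      rw [swap4 (fun u w i j => (if v i = u ∧ v j = w then
          (if C₀.Adj u w then z i * z j / ((m u : ℝ) * (m w : ℝ)) else 0) else 0))]
      apply Finset.sum_congr rfl; intro i _
      apply Finset.sum_congr rfl; intro j _
      exact collapse2 (v i) (v j) (fun u w =>
        if C₀.Adj u w then z i * z j / ((m u : ℝ) * (m w : ℝ)) else 0)
    rw [← hB1]
    rw [hB0]
    ring
  rw [hA, hB]
  -- Part C : split cmat
  have hsplit : ∀ i j, cmat m C₀ v i j * (z i * z j)
      = (if i = j then (0:ℝ) else (if v i = v j then ((m (v i) : ℝ))⁻¹ else 0) * (z i * z j))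
        + (1/2) * (if C₀.Adj (v i) (v j) then z i * z j / ((m (v i) : ℝ) * (m (v j) : ℝ)) else 0) := by
    intro i j
    unfold cmat Cmat
    by_cases hij : i = j
    · subst hij
      simp [SimpleGraph.irrefl]
    · rw [if_neg hij, if_neg hij]
      by_cases hvv : v i = v j
      · rw [if_pos hvv, if_pos hvv, if_neg (hvv ▸ C₀.irrefl)]
        · ring
      · rw [if_neg hvv, if_neg hvv]
        by_cases ha : C₀.Adj (v i) (v j)
        · rw [if_pos ha, if_pos ha]
          rw [zero_mul, zero_add]
          rw [mul_inv, mul_inv]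
          ring
        · simp [ha]
  rw [Finset.sum_congr rfl (fun i _ => Finset.sum_congr rfl (fun j _ => hsplit i j))]
  rw [Finset.sum_congr rfl (fun i _ => Finset.sum_add_distrib), Finset.sum_add_distrib]
  rw [diag_split (fun i j => (if v i = v j then ((m (v i) : ℝ))⁻¹ else 0) * (z i * z j))]
  have hdiag : ∀ i : Fin N, (if v i = v i then ((m (v i) : ℝ))⁻¹ else 0) * (z i * z i)
      = ((m (v i) : ℝ))⁻¹ * z i := by
    intro i
    rw [if_pos rfl, hz i]
  rw [Finset.sum_congr rfl (fun i _ => hdiag i)]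
  congr 1
  rw [Finset.mul_sum]
  exact Finset.sum_congr rfl (fun i _ => Finset.mul_sum _ _ _)


lemma fiber_sum {K N : ℕ} (m : Fin K → ℕ) (v : Fin N → Fin K)
    (hv : ∀ u, ((Finset.univ : Finset (Fin N)).filter (fun i => v i = u)).card = m u)
    (g : Fin K → ℝ) : ∑ i, g (v i) = ∑ u, (m u : ℝ) * g u := by
  rw [← Finset.sum_fiberwise_of_maps_to (fun i _ => Finset.mem_univ (v i)) (fun i => g (v i))]
  apply Finset.sum_congr rfl; intro u _
  have h1 : ∀ i ∈ (Finset.univ : Finset (Fin N)).filter (fun i => v i = u),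
      g (v i) = g u := fun i hi => by rw [(Finset.mem_filter.1 hi).2]
  rw [Finset.sum_congr rfl h1, Finset.sum_const, hv u, nsmul_eq_mul]

lemma double_fiber {K N : ℕ} (m : Fin K → ℕ) (v : Fin N → Fin K)
    (hv : ∀ u, ((Finset.univ : Finset (Fin N)).filter (fun i => v i = u)).card = m u)
    (F : Fin K → Fin K → ℝ) :
    ∑ i, ∑ j, F (v i) (v j) = ∑ u, ∑ w, (m u : ℝ) * (m w : ℝ) * F u w := by
  have h1 : ∀ i : Fin N, ∑ j, F (v i) (v j) = ∑ w, (m w : ℝ) * F (v i) w :=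
    fun i => fiber_sum m v hv _
  rw [Finset.sum_congr rfl (fun i _ => h1 i),
      fiber_sum m v hv (fun u => ∑ w, (m w : ℝ) * F u w)]
  apply Finset.sum_congr rfl; intro u _
  rw [Finset.mul_sum]
  apply Finset.sum_congr rfl; intro w _
  ring

lemma deg_sum {K : ℕ} (C₀ : SimpleGraph (Fin K)) (u : Fin K) :
    ∑ w, (if C₀.Adj u w then (1:ℝ) else 0) = (C₀.degree u : ℝ) := by
  rw [Finset.sum_boole]
  congr 1
  rw [SimpleGraph.degree, SimpleGraph.neighborFinset_eq_filter]

lemma row_eval {K : ℕ} (m : Fin K → ℕ) (hm : ∀ u, 1 ≤ m u) (C₀ : SimpleGraph (Fin K))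
    (u : Fin K) :
    ∑ w, (m w : ℝ) * Cmat m C₀ u w
      = 1 + (C₀.degree u : ℝ) * ((2:ℝ) * m u)⁻¹ := by
  have hmne : ∀ w, ((m w : ℝ)) ≠ 0 := fun w => by
    have := hm w; positivity
  have key : ∀ w, (m w : ℝ) * Cmat m C₀ u w
      = (if u = w then (1:ℝ) else 0) + (if C₀.Adj u w then ((2:ℝ) * m u)⁻¹ else 0) := by
    intro w
    unfold Cmat
    by_cases h : u = w
    · subst h
      rw [if_pos rfl, if_pos rfl, if_neg (C₀.irrefl), mul_inv_cancel₀ (hmne u), add_zero]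
    · rw [if_neg h, if_neg h]
      by_cases ha : C₀.Adj u w
      · rw [if_pos ha, if_pos ha, zero_add, mul_inv, mul_inv,
          show (m w:ℝ) * ((2:ℝ)⁻¹ * ((m u:ℝ))⁻¹ * ((m w:ℝ))⁻¹)
            = ((m w:ℝ) * ((m w:ℝ))⁻¹) * ((2:ℝ)⁻¹ * ((m u:ℝ))⁻¹) from by ring,
          mul_inv_cancel₀ (hmne w), one_mul]
      · simp [ha]
  rw [Finset.sum_congr rfl (fun w _ => key w), Finset.sum_add_distrib,
      Finset.sum_ite_eq]
  simp only [Finset.mem_univ, if_pos]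
  congr 1
  have : ∀ w, (if C₀.Adj u w then ((2:ℝ) * m u)⁻¹ else 0)
      = ((2:ℝ) * m u)⁻¹ * (if C₀.Adj u w then (1:ℝ) else 0) := by
    intro w; by_cases h : C₀.Adj u w <;> simp [h]
  rw [Finset.sum_congr rfl (fun w _ => this w), ← Finset.mul_sum, deg_sum]
  ring

lemma cmat_split {K N : ℕ} (m : Fin K → ℕ) (C₀ : SimpleGraph (Fin K)) (v : Fin N → Fin K)
    (i j : Fin N) :
    cmat m C₀ v i j = Cmat m C₀ (v i) (v j) - (if i = j then Cmat m C₀ (v i) (v j) else 0) := by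
  unfold cmat
  by_cases h : i = j <;> simp [h]

lemma d_eval {K N : ℕ} (m : Fin K → ℕ) (hm : ∀ u, 1 ≤ m u) (C₀ : SimpleGraph (Fin K))
    (v : Fin N → Fin K)
    (hv : ∀ u, ((Finset.univ : Finset (Fin N)).filter (fun i => v i = u)).card = m u)
    (i : Fin N) :
    ∑ j, cmat m C₀ v i j
      = 1 - ((m (v i) : ℝ))⁻¹ + (C₀.degree (v i) : ℝ) * ((2:ℝ) * m (v i))⁻¹ := by
  rw [Finset.sum_congr rfl (fun j _ => cmat_split m C₀ v i j), Finset.sum_sub_distrib]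
  rw [Finset.sum_ite_eq (Finset.univ : Finset (Fin N)) i
    (fun j => Cmat m C₀ (v i) (v j))]
  simp only [Finset.mem_univ, if_pos]
  rw [fiber_sum m v hv (fun w => Cmat m C₀ (v i) w), row_eval m hm C₀ (v i)]
  have : Cmat m C₀ (v i) (v i) = ((m (v i) : ℝ))⁻¹ := by unfold Cmat; rw [if_pos rfl]
  rw [this]
  ring

lemma T_eval {K N : ℕ} (m : Fin K → ℕ) (hm : ∀ u, 1 ≤ m u) (C₀ : SimpleGraph (Fin K))
    (v : Fin N → Fin K)
    (hv : ∀ u, ((Finset.univ : Finset (Fin N)).filter (fun i => v i = u)).card = m u)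
    (hN : N = ∑ u, m u) :
    ∑ i, ∑ j, cmat m C₀ v i j = (N : ℝ) - K + (C₀.edgeFinset.card : ℝ) := by
  rw [Finset.sum_congr rfl (fun i _ => d_eval m hm C₀ v hv i)]
  rw [fiber_sum m v hv (fun u => 1 - ((m u : ℝ))⁻¹ + (C₀.degree u : ℝ) * ((2:ℝ) * m u)⁻¹)]
  have hmne : ∀ u, ((m u : ℝ)) ≠ 0 := fun u => by have := hm u; positivity
  have key : ∀ u, (m u : ℝ) * (1 - ((m u : ℝ))⁻¹ + (C₀.degree u : ℝ) * ((2:ℝ) * m u)⁻¹)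
      = (m u : ℝ) - 1 + (C₀.degree u : ℝ) / 2 := by
    intro u
    have h0 := hmne u
    field_simp
  rw [Finset.sum_congr rfl (fun u _ => key u)]
  rw [Finset.sum_add_distrib, Finset.sum_sub_distrib]
  have h1 : ∑ u : Fin K, (m u : ℝ) = (N : ℝ) := by rw [hN]; push_cast; rfl
  have h2 : ∑ u : Fin K, (1:ℝ) = (K : ℝ) := by simp
  have h3 : ∑ u : Fin K, (C₀.degree u : ℝ) / 2 = (C₀.edgeFinset.card : ℝ) := by
    rw [← Finset.sum_div]
    have : ∑ u : Fin K, (C₀.degree u : ℝ) = 2 * (C₀.edgeFinset.card : ℝ) := by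
      have := SimpleGraph.sum_degrees_eq_twice_card_edges C₀
      exact_mod_cast congrArg (Nat.cast : ℕ → ℝ) this
    rw [this]; ring
  rw [h1, h2, h3]

lemma csq_eval {K N : ℕ} (m : Fin K → ℕ) (hm : ∀ u, 1 ≤ m u) (C₀ : SimpleGraph (Fin K))
    (v : Fin N → Fin K)
    (hv : ∀ u, ((Finset.univ : Finset (Fin N)).filter (fun i => v i = u)).card = m u) :
    ∑ i, ∑ j, (cmat m C₀ v i j)^2
      = (K : ℝ) + (∑ u, ∑ w, (if C₀.Adj u w then ((4:ℝ) * m u * m w)⁻¹ else 0))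
        - ∑ u, ((m u : ℝ))⁻¹ := by
  have hmne : ∀ u, ((m u : ℝ)) ≠ 0 := fun u => by have := hm u; positivity
  have hsq : ∀ i j, (cmat m C₀ v i j)^2
      = (Cmat m C₀ (v i) (v j))^2 - (if i = j then (Cmat m C₀ (v i) (v j))^2 else 0) := by
    intro i j
    unfold cmat
    by_cases h : i = j <;> simp [h]
  rw [Finset.sum_congr rfl (fun i _ => Finset.sum_congr rfl (fun j _ => hsq i j))]
  rw [Finset.sum_congr rfl (fun i _ => Finset.sum_sub_distrib _ _), Finset.sum_sub_distrib]
  have hdiag : ∀ i : Fin N, ∑ j, (if i = j then (Cmat m C₀ (v i) (v j))^2 else 0)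
      = ((m (v i) : ℝ))⁻¹ ^ 2 := by
    intro i
    rw [Finset.sum_ite_eq (Finset.univ : Finset (Fin N)) i
      (fun j => (Cmat m C₀ (v i) (v j))^2)]
    simp only [Finset.mem_univ, if_pos]
    unfold Cmat
    rw [if_pos rfl]
  rw [Finset.sum_congr rfl (fun i _ => hdiag i)]
  rw [double_fiber m v hv (fun u w => (Cmat m C₀ u w)^2)]
  rw [fiber_sum m v hv (fun u => ((m u : ℝ))⁻¹ ^ 2)]
  have key : ∀ u w : Fin K, (m u : ℝ) * (m w : ℝ) * (Cmat m C₀ u w)^2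
      = (if u = w then (1:ℝ) else 0) + (if C₀.Adj u w then ((4:ℝ) * m u * m w)⁻¹ else 0) := by
    intro u w
    unfold Cmat
    by_cases h : u = w
    · subst h
      rw [if_pos rfl, if_pos rfl, if_neg (C₀.irrefl), add_zero,
        show (m u:ℝ) * (m u:ℝ) * ((m u:ℝ))⁻¹^2 = ((m u:ℝ) * ((m u:ℝ))⁻¹)^2 from by ring,
        mul_inv_cancel₀ (hmne u), one_pow]
    · rw [if_neg h, if_neg h]
      by_cases ha : C₀.Adj u w
      · rw [if_pos ha, if_pos ha, zero_add]
        have h1 := hmne u; have h2 := hmne w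
        field_simp
        ring
      · simp [ha]
  rw [Finset.sum_congr rfl (fun u _ => Finset.sum_congr rfl (fun w _ => key u w))]
  rw [Finset.sum_congr rfl (fun u _ => Finset.sum_add_distrib), Finset.sum_add_distrib]
  have h1 : ∑ u : Fin K, ∑ w, (if u = w then (1:ℝ) else 0) = (K : ℝ) := by
    have : ∀ u : Fin K, ∑ w, (if u = w then (1:ℝ) else 0) = 1 := by
      intro u
      rw [Finset.sum_ite_eq]
      simp
    rw [Finset.sum_congr rfl (fun u _ => this u)]
    simp
  have h2 : ∀ u, (m u : ℝ) * ((m u : ℝ))⁻¹ ^ 2 = ((m u : ℝ))⁻¹ := by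
    intro u
    have h0 := hmne u
    field_simp
  rw [h1, Finset.sum_congr rfl (fun u _ => h2 u)]

lemma dsq_eval {K N : ℕ} (m : Fin K → ℕ) (hm : ∀ u, 1 ≤ m u) (C₀ : SimpleGraph (Fin K))
    (v : Fin N → Fin K)
    (hv : ∀ u, ((Finset.univ : Finset (Fin N)).filter (fun i => v i = u)).card = m u) :
    ∑ i, (∑ j, cmat m C₀ v i j)^2
      = ∑ u, (m u : ℝ) *
          (1 - ((m u : ℝ))⁻¹ + (C₀.degree u : ℝ) * ((2:ℝ) * m u)⁻¹)^2 := by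
  rw [Finset.sum_congr rfl (fun i _ => by rw [d_eval m hm C₀ v hv i])]
  exact fiber_sum m v hv
    (fun u => (1 - ((m u : ℝ))⁻¹ + (C₀.degree u : ℝ) * ((2:ℝ) * m u)⁻¹)^2)

lemma collapseL {N : ℕ} (i : Fin N) (F : Fin N → ℝ) :
    ∑ k, (if i = k then (1:ℝ) else 0) * F k = F i := by
  have h : ∀ k, (if i = k then (1:ℝ) else 0) * F k = if i = k then F k else 0 := by
    intro k; by_cases h : i = k <;> simp [h]
  rw [Finset.sum_congr rfl (fun k _ => h k), Finset.sum_ite_eq]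
  simp
/-- **part of Lemma 4 of the paper.**  Covariance of the averaging
within-sample edge-counts under the permutation null distribution. -/
theorem covariance_R1a_R2a
    -- number of distinct values and multiplicities
    (K : ℕ) (hK : 1 ≤ K) (m : Fin K → ℕ) (hm : ∀ u, 1 ≤ m u)
    -- total sample size
    (N : ℕ) (hN : N = ∑ u, m u) (hNge : 4 ≤ N)
    -- value map with prescribed fiber sizes
    (v : Fin N → Fin K)
    (hv : ∀ u, (Finset.univ.filter (fun i => v i = u)).card = m u)
    -- similarity graph on the distinct values
    (C₀ : SimpleGraph (Fin K))
    -- sizes of sample 1 and sample 2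
    (n₁ n₂ : ℕ) (hn₁ : 1 ≤ n₁) (hn₁' : n₁ ≤ N - 1) (hn₂ : n₂ = N - n₁)
    -- expectation under the permutation null distribution (uniform over
    -- all `n₁`-element subsets of `Fin N`)
    (E : (Finset (Fin N) → ℝ) → ℝ)
    (hE : ∀ f, E f =
      (∑ S ∈ Finset.powersetCard n₁ (Finset.univ : Finset (Fin N)), f S) / (N.choose n₁ : ℝ))
    -- within-group counts
    (n1 : Fin K → Finset (Fin N) → ℝ)
    (hn1 : ∀ u S, n1 u S = ((S.filter (fun i => v i = u)).card : ℝ))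
    (n2 : Fin K → Finset (Fin N) → ℝ)
    (hn2 : ∀ u S, n2 u S = (m u : ℝ) - n1 u S)
    -- the averaging statistics
    (R1a : Finset (Fin N) → ℝ)
    (hR1a : ∀ S, R1a S = ∑ u, n1 u S * (n1 u S - 1) / (m u : ℝ)
        + ∑ e ∈ C₀.edgeFinset,
            Sym2.lift ⟨fun u w => n1 u S * n1 w S / ((m u : ℝ) * (m w : ℝ)),
              fun u w => by ring⟩ e)
    (R2a : Finset (Fin N) → ℝ)
    (hR2a : ∀ S, R2a S = ∑ u, n2 u S * (n2 u S - 1) / (m u : ℝ)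
        + ∑ e ∈ C₀.edgeFinset,
            Sym2.lift ⟨fun u w => n2 u S * n2 w S / ((m u : ℝ) * (m w : ℝ)),
              fun u w => by ring⟩ e)
    -- covariance under the permutation null distribution
    (Cov : (Finset (Fin N) → ℝ) → (Finset (Fin N) → ℝ) → ℝ)
    (hCov : ∀ f g, Cov f g = E (fun S => (f S - E f) * (g S - E g)))
    -- the constants p₁, q₁ and f₁
    (p₁ q₁ f₁ : ℝ)
    (hp₁ : p₁ = (n₁ : ℝ) * ((n₁ : ℝ) - 1) / ((N : ℝ) * ((N : ℝ) - 1)))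
    (hq₁ : q₁ = (n₂ : ℝ) * ((n₂ : ℝ) - 1) / ((N : ℝ) * ((N : ℝ) - 1)))
    (hf₁ : f₁ = (n₁ : ℝ) * ((n₁ : ℝ) - 1) * (n₂ : ℝ) * ((n₂ : ℝ) - 1) /
      ((N : ℝ) * ((N : ℝ) - 1) * ((N : ℝ) - 2) * ((N : ℝ) - 3))) :
    Cov R1a R2a = (f₁ - p₁ * q₁) * ((N : ℝ) - (K : ℝ) + (C₀.edgeFinset.card : ℝ)) ^ 2
      + f₁ * ( -4 * ((N : ℝ) - (K : ℝ) + 2 * (C₀.edgeFinset.card : ℝ)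
            + (∑ u, (C₀.degree u : ℝ) ^ 2 / (4 * (m u : ℝ)))
            - (∑ u, (C₀.degree u : ℝ) / (m u : ℝ)))
        + 6 * ((K : ℝ) - ∑ u, 1 / (m u : ℝ))
        + (∑ e ∈ C₀.edgeFinset,
            Sym2.lift ⟨fun u w => 1 / ((m u : ℝ) * (m w : ℝ)), fun u w => by ring⟩ e) ) := by
  classical
  have hplus : n₁ + n₂ = N := by omega
  have hn2ge : 1 ≤ n₂ := by omega
  have hn1N : n₁ ≤ N := by omega
  have hch : ((N.choose n₁ : ℝ)) ≠ 0 := choose_ne hn1N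
  have hmne : ∀ u, ((m u : ℝ)) ≠ 0 := fun u => by have := hm u; positivity
  -- abbreviation for the coefficient matrix
  set c : Fin N → Fin N → ℝ := cmat m C₀ v with hcdef
  have hcsymm : ∀ i j, c i j = c j i := fun i j => cmat_symm m C₀ v i j
  have hcdiag : ∀ i, c i i = 0 := fun i => by simp [hcdef, cmat]
  -- expectation toolkit
  have hEadd : ∀ f g : Finset (Fin N) → ℝ, E (fun S => f S + g S) = E f + E g := by
    intro f g
    rw [hE (fun S => f S + g S), hE f, hE g, Finset.sum_add_distrib, add_div]
  have hEmul : ∀ (r : ℝ) (f : Finset (Fin N) → ℝ), E (fun S => r * f S) = r * E f := by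
    intro r f
    rw [hE (fun S => r * f S), hE f, ← Finset.mul_sum, mul_div_assoc]
  have hEconst : ∀ r : ℝ, E (fun _ => r) = r := by
    intro r
    rw [hE (fun _ => r), Finset.sum_const, Finset.card_powersetCard, Finset.card_univ,
      Fintype.card_fin, nsmul_eq_mul, mul_comm, mul_div_assoc, div_self hch, mul_one]
  have hEsum : ∀ f : Fin N → Finset (Fin N) → ℝ,
      E (fun S => ∑ i, f i S) = ∑ i, E (f i) := by
    intro f
    rw [hE (fun S => ∑ i, f i S), Finset.sum_comm, Finset.sum_div]
    exact Finset.sum_congr rfl (fun i _ => (hE (f i)).symm)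
  -- idempotence of the indicators
  have hxx : ∀ (i : Fin N) S, xI i S * xI i S = xI i S := by
    intro i S
    by_cases h : i ∈ S <;> simp [xI, h]
  have hyy : ∀ (i : Fin N) S, (1 - xI i S) * (1 - xI i S) = 1 - xI i S := by
    intro i S
    by_cases h : i ∈ S <;> simp [xI, h]
  -- representation of the two statistics
  have hg1 : ∀ S u, n1 u S = ∑ i, if v i = u then xI i S else 0 := by
    intro S u
    rw [hn1 u S]
    have h1 : (∑ i, if v i = u then xI i S else 0)
        = ∑ i : Fin N, (if v i = u ∧ i ∈ S then (1:ℝ) else 0) :=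
      Finset.sum_congr rfl (fun i _ => by
        by_cases h1 : v i = u <;> by_cases h2 : i ∈ S <;> simp [xI, h1, h2])
    have h2 : (Finset.univ.filter (fun i => v i = u ∧ i ∈ S))
        = S.filter (fun i => v i = u) := by
      ext i
      simp [and_comm]
    rw [h1, Finset.sum_boole, h2]
  have hg2 : ∀ S u, n2 u S = ∑ i, if v i = u then (1 - xI i S) else 0 := by
    intro S u
    rw [hn2 u S, hg1 S u]
    have h1 : (∑ i, if v i = u then (1 - xI i S) else 0)
        = (∑ i, (if v i = u then (1:ℝ) else 0)) - ∑ i, (if v i = u then xI i S else 0) := by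
      rw [← Finset.sum_sub_distrib]
      exact Finset.sum_congr rfl (fun i _ => by by_cases h : v i = u <;> simp [h])
    rw [h1, Finset.sum_boole, hv u]
  have hRep1 : ∀ S, R1a S = ∑ i, ∑ j, c i j * (xI i S * xI j S) := by
    intro S
    rw [hR1a S]
    exact rep m C₀ v (fun i => xI i S) (fun i => hxx i S) (fun u => n1 u S) (hg1 S)
  have hRep2 : ∀ S, R2a S = ∑ i, ∑ j, c i j * ((1 - xI i S) * (1 - xI j S)) := by
    intro S
    rw [hR2a S]
    exact rep m C₀ v (fun i => 1 - xI i S) (fun i => hyy i S) (fun u => n2 u S) (hg2 S)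
  -- expectation of R1a
  have hT : ∀ r : ℝ, (∑ i, ∑ j, c i j * r) = (∑ i, ∑ j, c i j) * r := by
    intro r
    rw [Finset.sum_mul]
    apply Finset.sum_congr rfl; intro i _
    rw [Finset.sum_mul]
  have hER1 : E R1a = (∑ i, ∑ j, c i j) * p₁ := by
    have h0 : E R1a = ∑ i, ∑ j, c i j * E (fun S => xI i S * xI j S) := by
      rw [congrArg E (funext hRep1), hEsum]
      apply Finset.sum_congr rfl; intro i _
      rw [hEsum]
      exact Finset.sum_congr rfl (fun j _ => hEmul _ _)
    rw [h0, ← hT p₁]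
    apply Finset.sum_congr rfl; intro i _
    apply Finset.sum_congr rfl; intro j _
    by_cases hij : i = j
    · rw [hij, hcdiag j, zero_mul, zero_mul]
    · congr 1
      rw [hE, hp₁]
      exact momX hplus hNge hn₁ hij
  have hER2 : E R2a = (∑ i, ∑ j, c i j) * q₁ := by
    have h0 : E R2a = ∑ i, ∑ j, c i j * E (fun S => (1 - xI i S) * (1 - xI j S)) := by
      rw [congrArg E (funext hRep2), hEsum]
      apply Finset.sum_congr rfl; intro i _
      rw [hEsum]
      exact Finset.sum_congr rfl (fun j _ => hEmul _ _)
    rw [h0, ← hT q₁]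
    apply Finset.sum_congr rfl; intro i _
    apply Finset.sum_congr rfl; intro j _
    by_cases hij : i = j
    · rw [hij, hcdiag j, zero_mul, zero_mul]
    · congr 1
      rw [hE, hq₁]
      exact momY hplus hNge hn2ge hij
  -- product expansion
  have hprod : ∀ S, R1a S * R2a S
      = ∑ i, ∑ j, ∑ k, ∑ l, (c i j * c k l) *
          (xI i S * xI j S * (1 - xI k S) * (1 - xI l S)) := by
    intro S
    rw [hRep1 S, hRep2 S, Finset.sum_mul_sum]
    apply Finset.sum_congr rfl; intro i _
    have h1 : ∀ k, (∑ j, c i j * (xI i S * xI j S)) *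
        (∑ l, c k l * ((1 - xI k S) * (1 - xI l S)))
        = ∑ j, ∑ l, (c i j * c k l) * (xI i S * xI j S * (1 - xI k S) * (1 - xI l S)) := by
      intro k
      rw [Finset.sum_mul_sum]
      apply Finset.sum_congr rfl; intro j _
      apply Finset.sum_congr rfl; intro l _
      ring
    rw [Finset.sum_congr rfl (fun k _ => h1 k)]
    exact Finset.sum_comm
  -- expectation of the product
  have hEprod : E (fun S => R1a S * R2a S)
      = ∑ i, ∑ j, ∑ k, ∑ l, (c i j * c k l) *
          E (fun S => xI i S * xI j S * (1 - xI k S) * (1 - xI l S)) := by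
    rw [congrArg E (funext hprod), hEsum]
    apply Finset.sum_congr rfl; intro i _
    rw [hEsum]
    apply Finset.sum_congr rfl; intro j _
    rw [hEsum]
    apply Finset.sum_congr rfl; intro k _
    rw [hEsum]
    exact Finset.sum_congr rfl (fun l _ => hEmul _ _)
  -- evaluation of each fourth moment
  have htuple : ∀ i j k l : Fin N, (c i j * c k l) *
      E (fun S => xI i S * xI j S * (1 - xI k S) * (1 - xI l S))
      = (c i j * c k l) * (f₁ * (1 -
          ((if i = k then (1:ℝ) else 0) + (if i = l then (1:ℝ) else 0)
            + (if j = k then (1:ℝ) else 0) + (if j = l then (1:ℝ) else 0)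
            - (if i = k then (1:ℝ) else 0) * (if j = l then (1:ℝ) else 0)
            - (if i = l then (1:ℝ) else 0) * (if j = k then (1:ℝ) else 0)))) := by
    intro i j k l
    by_cases hij : i = j
    · rw [hij, hcdiag j, zero_mul, zero_mul, zero_mul]
    · by_cases hkl : k = l
      · rw [hkl, hcdiag l, mul_zero, zero_mul, zero_mul]
      · have hzero : ∀ a : Fin N, (a = i ∨ a = j) → (a = k ∨ a = l) →
            E (fun S => xI i S * xI j S * (1 - xI k S) * (1 - xI l S)) = 0 := by
          intro a ha1 ha2
          have hz : ∀ S, xI i S * xI j S * (1 - xI k S) * (1 - xI l S) = 0 := by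
            intro S
            by_cases h : a ∈ S
            · rcases ha2 with rfl | rfl
              · simp [xI, h]
              · simp [xI, h]
            · rcases ha1 with rfl | rfl
              · simp [xI, h]
              · simp [xI, h]
          rw [congrArg E (funext hz), hEconst]
        by_cases hik : i = k <;> by_cases hil : i = l <;>
          by_cases hjk : j = k <;> by_cases hjl : j = l
        · exact absurd (hik.symm.trans hil) hkl
        · exact absurd (hik.symm.trans hil) hkl
        · exact absurd (hik.symm.trans hil) hkl
        · exact absurd (hik.symm.trans hil) hkl
        · exact absurd (hjk.symm.trans hjl) hkl
        · exact absurd (hik.trans (hjk.symm : k = j)) hij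
        · rw [hzero i (Or.inl rfl) (Or.inl hik), if_pos hik, if_neg hil, if_neg hjk,
            if_pos hjl]
          ring
        · rw [hzero i (Or.inl rfl) (Or.inl hik), if_pos hik, if_neg hil, if_neg hjk,
            if_neg hjl]
          ring
        · exact absurd (hjk.symm.trans hjl) hkl
        · rw [hzero i (Or.inl rfl) (Or.inr hil), if_neg hik, if_pos hil, if_pos hjk,
            if_neg hjl]
          ring
        · exact absurd (hil.trans (hjl.symm : l = j)) hij
        · rw [hzero i (Or.inl rfl) (Or.inr hil), if_neg hik, if_pos hil, if_neg hjk,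
            if_neg hjl]
          ring
        · exact absurd (hjk.symm.trans hjl) hkl
        · rw [hzero j (Or.inr rfl) (Or.inl hjk), if_neg hik, if_neg hil, if_pos hjk,
            if_neg hjl]
          ring
        · rw [hzero j (Or.inr rfl) (Or.inr hjl), if_neg hik, if_neg hil, if_neg hjk,
            if_pos hjl]
          ring
        · have hEv : E (fun S => xI i S * xI j S * (1 - xI k S) * (1 - xI l S)) = f₁ := by
            rw [hE, hf₁]
            exact momXY hplus hNge hn₁ hn2ge hij hkl hik hil hjk hjl
          rw [hEv, if_neg hik, if_neg hil, if_neg hjk, if_neg hjl]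
          ring
    -- symmetric column sums
  have hdsym : ∀ l, ∑ k, c k l = ∑ b, c l b :=
    fun l => Finset.sum_congr rfl (fun k _ => hcsymm k l)
  -- inner double-sum evaluation
  have innerEq : ∀ i j : Fin N,
      ∑ k, ∑ l, c k l * (f₁ * (1 -
          ((if i = k then (1:ℝ) else 0) + (if i = l then (1:ℝ) else 0)
            + (if j = k then (1:ℝ) else 0) + (if j = l then (1:ℝ) else 0)
            - (if i = k then (1:ℝ) else 0) * (if j = l then (1:ℝ) else 0)
            - (if i = l then (1:ℝ) else 0) * (if j = k then (1:ℝ) else 0))))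
      = f₁ * (∑ a, ∑ b, c a b) - 2 * (f₁ * (∑ b, c i b)) - 2 * (f₁ * (∑ b, c j b))
        + 2 * (f₁ * c i j) := by
    intro i j
    have expand : ∀ k l : Fin N, c k l * (f₁ * (1 -
          ((if i = k then (1:ℝ) else 0) + (if i = l then (1:ℝ) else 0)
            + (if j = k then (1:ℝ) else 0) + (if j = l then (1:ℝ) else 0)
            - (if i = k then (1:ℝ) else 0) * (if j = l then (1:ℝ) else 0)
            - (if i = l then (1:ℝ) else 0) * (if j = k then (1:ℝ) else 0))))
        = f₁ * c k l
          - f₁ * ((if i = k then (1:ℝ) else 0) * c k l)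
          - f₁ * ((if i = l then (1:ℝ) else 0) * c k l)
          - f₁ * ((if j = k then (1:ℝ) else 0) * c k l)
          - f₁ * ((if j = l then (1:ℝ) else 0) * c k l)
          + f₁ * ((if i = k then (1:ℝ) else 0) * ((if j = l then (1:ℝ) else 0) * c k l))
          + f₁ * ((if i = l then (1:ℝ) else 0) * ((if j = k then (1:ℝ) else 0) * c k l)) :=
      fun k l => by ring
    rw [Finset.sum_congr rfl (fun k _ => Finset.sum_congr rfl (fun l _ => expand k l))]
    simp only [Finset.sum_add_distrib, Finset.sum_sub_distrib]
    have A0 : ∑ k, ∑ l, f₁ * c k l = f₁ * (∑ a, ∑ b, c a b) := by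
      rw [Finset.mul_sum]
      exact Finset.sum_congr rfl (fun k _ => (Finset.mul_sum _ _ _).symm)
    have A1gen : ∀ a : Fin N, ∑ k, ∑ l, f₁ * ((if a = k then (1:ℝ) else 0) * c k l)
        = f₁ * (∑ b, c a b) := by
      intro a
      have h1 : ∀ k, ∑ l, f₁ * ((if a = k then (1:ℝ) else 0) * c k l)
          = (if a = k then (1:ℝ) else 0) * (f₁ * ∑ b, c k b) := by
        intro k
        have e : ∀ l, f₁ * ((if a = k then (1:ℝ) else 0) * c k l)
            = (if a = k then (1:ℝ) else 0) * (f₁ * c k l) := fun l => by ring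
        rw [Finset.sum_congr rfl (fun l _ => e l), ← Finset.mul_sum, ← Finset.mul_sum]
      rw [Finset.sum_congr rfl (fun k _ => h1 k), collapseL a (fun k => f₁ * ∑ b, c k b)]
    have A2gen : ∀ a : Fin N, ∑ k, ∑ l, f₁ * ((if a = l then (1:ℝ) else 0) * c k l)
        = f₁ * (∑ b, c a b) := by
      intro a
      rw [Finset.sum_comm]
      have h1 : ∀ l, ∑ k, f₁ * ((if a = l then (1:ℝ) else 0) * c k l)
          = (if a = l then (1:ℝ) else 0) * (f₁ * ∑ k, c k l) := by
        intro l
        have e : ∀ k, f₁ * ((if a = l then (1:ℝ) else 0) * c k l)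
            = (if a = l then (1:ℝ) else 0) * (f₁ * c k l) := fun k => by ring
        rw [Finset.sum_congr rfl (fun k _ => e k), ← Finset.mul_sum, ← Finset.mul_sum]
      rw [Finset.sum_congr rfl (fun l _ => h1 l), collapseL a (fun l => f₁ * ∑ k, c k l),
        hdsym a]
    have A5 : ∑ k, ∑ l, f₁ * ((if i = k then (1:ℝ) else 0)
        * ((if j = l then (1:ℝ) else 0) * c k l)) = f₁ * c i j := by
      have h1 : ∀ k, ∑ l, f₁ * ((if i = k then (1:ℝ) else 0)
          * ((if j = l then (1:ℝ) else 0) * c k l))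
          = (if i = k then (1:ℝ) else 0) * (f₁ * c k j) := by
        intro k
        have e : ∀ l, f₁ * ((if i = k then (1:ℝ) else 0) * ((if j = l then (1:ℝ) else 0) * c k l))
            = (if i = k then (1:ℝ) else 0)
              * ((if j = l then (1:ℝ) else 0) * (f₁ * c k l)) := fun l => by ring
        rw [Finset.sum_congr rfl (fun l _ => e l), ← Finset.mul_sum,
          collapseL j (fun l => f₁ * c k l)]
      rw [Finset.sum_congr rfl (fun k _ => h1 k), collapseL i (fun k => f₁ * c k j)]
    have A6 : ∑ k, ∑ l, f₁ * ((if i = l then (1:ℝ) else 0)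
        * ((if j = k then (1:ℝ) else 0) * c k l)) = f₁ * c i j := by
      have h1 : ∀ k, ∑ l, f₁ * ((if i = l then (1:ℝ) else 0)
          * ((if j = k then (1:ℝ) else 0) * c k l))
          = (if j = k then (1:ℝ) else 0) * (f₁ * c k i) := by
        intro k
        have e : ∀ l, f₁ * ((if i = l then (1:ℝ) else 0) * ((if j = k then (1:ℝ) else 0) * c k l))
            = (if j = k then (1:ℝ) else 0)
              * ((if i = l then (1:ℝ) else 0) * (f₁ * c k l)) := fun l => by ring
        rw [Finset.sum_congr rfl (fun l _ => e l), ← Finset.mul_sum,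
          collapseL i (fun l => f₁ * c k l)]
      rw [Finset.sum_congr rfl (fun k _ => h1 k), collapseL j (fun k => f₁ * c k i),
        hcsymm j i]
    rw [A0, A1gen i, A1gen j, A2gen i, A2gen j, A5, A6]
    ring
  -- full quadruple-sum evaluation
  have hEPval : E (fun S => R1a S * R2a S)
      = f₁ * ((∑ a, ∑ b, c a b) * (∑ a, ∑ b, c a b))
        - 4 * (f₁ * (∑ i, (∑ b, c i b) * (∑ b, c i b)))
        + 2 * (f₁ * (∑ i, ∑ j, c i j * c i j)) := by
    rw [hEprod]
    rw [Finset.sum_congr rfl (fun i _ => Finset.sum_congr rfl (fun j _ =>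
        Finset.sum_congr rfl (fun k _ => Finset.sum_congr rfl (fun l _ => htuple i j k l))))]
    have hpull : ∀ i j : Fin N, ∑ k, ∑ l, (c i j * c k l) * (f₁ * (1 -
        ((if i = k then (1:ℝ) else 0) + (if i = l then (1:ℝ) else 0)
          + (if j = k then (1:ℝ) else 0) + (if j = l then (1:ℝ) else 0)
          - (if i = k then (1:ℝ) else 0) * (if j = l then (1:ℝ) else 0)
          - (if i = l then (1:ℝ) else 0) * (if j = k then (1:ℝ) else 0))))
        = c i j * (f₁ * (∑ a, ∑ b, c a b) - 2 * (f₁ * (∑ b, c i b))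
            - 2 * (f₁ * (∑ b, c j b)) + 2 * (f₁ * c i j)) := by
      intro i j
      rw [← innerEq i j, Finset.mul_sum]
      apply Finset.sum_congr rfl; intro k _
      rw [Finset.mul_sum]
      apply Finset.sum_congr rfl; intro l _
      ring
    rw [Finset.sum_congr rfl (fun i _ => Finset.sum_congr rfl (fun j _ => hpull i j))]
    have expand2 : ∀ i j : Fin N, c i j * (f₁ * (∑ a, ∑ b, c a b)
          - 2 * (f₁ * (∑ b, c i b)) - 2 * (f₁ * (∑ b, c j b)) + 2 * (f₁ * c i j))
        = f₁ * ((∑ a, ∑ b, c a b) * c i j)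
          - 2 * (f₁ * ((∑ b, c i b) * c i j))
          - 2 * (f₁ * ((∑ b, c j b) * c i j))
          + 2 * (f₁ * (c i j * c i j)) := fun i j => by ring
    rw [Finset.sum_congr rfl (fun i _ => Finset.sum_congr rfl (fun j _ => expand2 i j))]
    simp only [Finset.sum_add_distrib, Finset.sum_sub_distrib]
    have B0 : ∑ i, ∑ j, f₁ * ((∑ a, ∑ b, c a b) * c i j)
        = f₁ * ((∑ a, ∑ b, c a b) * (∑ a, ∑ b, c a b)) := by
      have h1 : ∀ i : Fin N, ∑ j, f₁ * ((∑ a, ∑ b, c a b) * c i j)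
          = f₁ * ((∑ a, ∑ b, c a b) * (∑ b, c i b)) := by
        intro i
        rw [← Finset.mul_sum, ← Finset.mul_sum]
      rw [Finset.sum_congr rfl (fun i _ => h1 i), ← Finset.mul_sum, ← Finset.mul_sum]
    have B1 : ∑ i, ∑ j, 2 * (f₁ * ((∑ b, c i b) * c i j))
        = 2 * (f₁ * (∑ i, (∑ b, c i b) * (∑ b, c i b))) := by
      have h1 : ∀ i : Fin N, ∑ j, 2 * (f₁ * ((∑ b, c i b) * c i j))
          = 2 * (f₁ * ((∑ b, c i b) * (∑ b, c i b))) := by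
        intro i
        rw [← Finset.mul_sum, ← Finset.mul_sum, ← Finset.mul_sum]
      rw [Finset.sum_congr rfl (fun i _ => h1 i), ← Finset.mul_sum, ← Finset.mul_sum]
    have B2 : ∑ i, ∑ j, 2 * (f₁ * ((∑ b, c j b) * c i j))
        = 2 * (f₁ * (∑ i, (∑ b, c i b) * (∑ b, c i b))) := by
      rw [Finset.sum_comm]
      have h1 : ∀ j : Fin N, ∑ i, 2 * (f₁ * ((∑ b, c j b) * c i j))
          = 2 * (f₁ * ((∑ b, c j b) * (∑ b, c j b))) := by
        intro j
        rw [← Finset.mul_sum, ← Finset.mul_sum, ← Finset.mul_sum, hdsym j]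
      rw [Finset.sum_congr rfl (fun j _ => h1 j), ← Finset.mul_sum, ← Finset.mul_sum]
    have B3 : ∑ i, ∑ j, 2 * (f₁ * (c i j * c i j))
        = 2 * (f₁ * (∑ i, ∑ j, c i j * c i j)) := by
      have h1 : ∀ i : Fin N, ∑ j, 2 * (f₁ * (c i j * c i j))
          = 2 * (f₁ * (∑ j, c i j * c i j)) := by
        intro i
        rw [← Finset.mul_sum, ← Finset.mul_sum]
      rw [Finset.sum_congr rfl (fun i _ => h1 i), ← Finset.mul_sum, ← Finset.mul_sum]
    rw [B0, B1, B2, B3]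
    ring
  -- covariance as moment difference
  have hCovExp : Cov R1a R2a = E (fun S => R1a S * R2a S) - E R1a * E R2a := by
    rw [hCov]
    have hfun : (fun S => (R1a S - E R1a) * (R2a S - E R2a))
        = fun S => R1a S * R2a S + ((-(E R1a)) * R2a S + ((-(E R2a)) * R1a S
            + (E R1a * E R2a))) := funext (fun S => by ring)
    rw [congrArg E hfun, hEadd, hEadd, hEadd, hEmul, hEmul, hEconst, hER1, hER2]
    ring
  -- bridging identities
  have hTcv : (∑ a : Fin N, ∑ b, c a b) = (N:ℝ) - K + (C₀.edgeFinset.card : ℝ) := by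
    rw [hcdef]
    exact T_eval m hm C₀ v hv hN
  have hhand : ∑ u : Fin K, (C₀.degree u : ℝ) = 2 * (C₀.edgeFinset.card : ℝ) := by
    exact_mod_cast congrArg (Nat.cast : ℕ → ℝ) (SimpleGraph.sum_degrees_eq_twice_card_edges C₀)
  have hSddv : (∑ i : Fin N, (∑ b, c i b) * (∑ b, c i b))
      = (N:ℝ) - 2*K + 2*(C₀.edgeFinset.card : ℝ) + (∑ u, 1/(m u:ℝ))
        - (∑ u, (C₀.degree u : ℝ)/(m u:ℝ)) + (∑ u, (C₀.degree u : ℝ)^2/(4*(m u:ℝ))) := by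
    have h1 : (∑ i : Fin N, (∑ b, c i b) * (∑ b, c i b))
        = ∑ i : Fin N, (∑ b, c i b)^2 :=
      Finset.sum_congr rfl (fun i _ => (pow_two _).symm)
    rw [h1, hcdef, dsq_eval m hm C₀ v hv]
    have key : ∀ u, (m u : ℝ) * (1 - ((m u : ℝ))⁻¹ + (C₀.degree u : ℝ) * ((2:ℝ) * m u)⁻¹)^2
        = ((m u : ℝ) - 2 + (C₀.degree u : ℝ))
          + (1/(m u:ℝ) - (C₀.degree u : ℝ)/(m u:ℝ) + (C₀.degree u : ℝ)^2/(4*(m u:ℝ))) := by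
      intro u
      have h0 := hmne u
      field_simp
      ring
    rw [Finset.sum_congr rfl (fun u _ => key u), Finset.sum_add_distrib]
    have p1 : ∑ u : Fin K, ((m u : ℝ) - 2 + (C₀.degree u : ℝ))
        = (N:ℝ) - 2*K + 2*(C₀.edgeFinset.card : ℝ) := by
      rw [Finset.sum_add_distrib, Finset.sum_sub_distrib]
      have e1 : ∑ u : Fin K, (m u : ℝ) = (N:ℝ) := by rw [hN]; push_cast; rfl
      have e2 : ∑ u : Fin K, (2:ℝ) = 2*(K:ℝ) := by
        rw [Finset.sum_const, Finset.card_univ, Fintype.card_fin, nsmul_eq_mul]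
        ring
      rw [e1, e2, hhand]
    have p2 : ∑ u : Fin K, (1/(m u:ℝ) - (C₀.degree u : ℝ)/(m u:ℝ)
          + (C₀.degree u : ℝ)^2/(4*(m u:ℝ)))
        = (∑ u, 1/(m u:ℝ)) - (∑ u, (C₀.degree u : ℝ)/(m u:ℝ))
          + (∑ u, (C₀.degree u : ℝ)^2/(4*(m u:ℝ))) := by
      rw [Finset.sum_add_distrib, Finset.sum_sub_distrib]
    rw [p1, p2]
    ring
  have hSccv : (∑ i : Fin N, ∑ j, c i j * c i j)
      = (K:ℝ) + (1/2) * (∑ e ∈ C₀.edgeFinset,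
            Sym2.lift ⟨fun u w => 1 / ((m u : ℝ) * (m w : ℝ)), fun u w => by ring⟩ e)
        - (∑ u, 1/(m u:ℝ)) := by
    have h1 : (∑ i : Fin N, ∑ j, c i j * c i j) = ∑ i : Fin N, ∑ j, (c i j)^2 :=
      Finset.sum_congr rfl (fun i _ => Finset.sum_congr rfl (fun j _ => (pow_two _).symm))
    rw [h1, hcdef, csq_eval m hm C₀ v hv]
    have hQ : (∑ u, ∑ w, (if C₀.Adj u w then ((4:ℝ) * m u * m w)⁻¹ else 0))
        = (1/2) * (∑ e ∈ C₀.edgeFinset,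
            Sym2.lift ⟨fun u w => 1 / ((m u : ℝ) * (m w : ℝ)), fun u w => by ring⟩ e) := by
      rw [edge_sum C₀ (fun u w => ((4:ℝ) * m u * m w)⁻¹) (fun a b => by ring)]
      have h2 : ∀ e ∈ C₀.edgeFinset,
          Sym2.lift ⟨fun u w => ((4:ℝ) * m u * m w)⁻¹, fun a b => by ring⟩ e
          = (1/4) * Sym2.lift ⟨fun u w => 1 / ((m u : ℝ) * (m w : ℝ)),
              fun u w => by ring⟩ e := by
        intro e _
        induction e using Sym2.ind with
        | _ a b =>
          rw [Sym2.lift_mk, Sym2.lift_mk]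
          ring
      rw [Finset.sum_congr rfl h2, ← Finset.mul_sum]
      ring
    have hS1 : (∑ u : Fin K, ((m u : ℝ))⁻¹) = ∑ u, 1/(m u:ℝ) :=
      Finset.sum_congr rfl (fun u _ => (inv_eq_one_div _))
    rw [hQ, hS1]
  -- final assembly
  rw [hCovExp, hEPval, hER1, hER2, hTcv, hSddv, hSccv]
  ring
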